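/- Suppose g, h : ℝⁿ → ℝ are convex, g differentiable, x* minimizes g + h, and for some λ > 0 and points x, ε with ε/λ ∈ ∇g(x) + ∂h(x - ε). Then g(x) + h(x) - (g(x*) + h(x*)) ≤ ⟨x - x*, ε/λ⟩ + ⟨ε, q - p⟩ for any q ∈ ∂h(x) and the specific p ∈ ∂h(x - ε) satisfying ε/λ = ∇g(x) + p. -/

import Mathlib

open RealInnerProductSpace

/-- The subdifferential of a convex function. -/
def subdiff {n : ℕ} (h : EuclideanSpace ℝ (Fin n) → ℝ) (x : EuclideanSpace ℝ (Fin n)) :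
    Set (EuclideanSpace ℝ (Fin n)) :=
  {p | ∀ y, h x + ⟪p, y - x⟫ ≤ h y}

lemma grad_ineq {n : ℕ} (g : EuclideanSpace ℝ (Fin n) → ℝ)
    (hg : ConvexOn ℝ Set.univ g) {x gx : EuclideanSpace ℝ (Fin n)}
    (hgdiff : HasGradientAt g gx x) (y : EuclideanSpace ℝ (Fin n)) :
    g x + ⟪gx, y - x⟫ ≤ g y := by
  set φ : ℝ → ℝ := fun t => g (t • (y - x) + x) with hφ
  have hfun : φ = g ∘ (AffineMap.lineMap x y) := by
    funext t
    simp [hφ, AffineMap.lineMap_apply]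
  have hconv : ConvexOn ℝ Set.univ φ := by
    rw [hfun]
    simpa using hg.comp_affineMap (AffineMap.lineMap x y)
  have hline : HasDerivAt (fun t : ℝ => t • (y - x) + x) (y - x) 0 := by
    simpa using ((hasDerivAt_id (0:ℝ)).smul_const (y - x)).add_const x
  have hfd : HasFDerivAt g ((InnerProductSpace.toDual ℝ _) gx) ((0:ℝ) • (y - x) + x) := by
    simpa using hgdiff.hasFDerivAt
  have hd : HasDerivAt φ ⟪gx, y - x⟫ 0 := by
    have := hfd.comp_hasDerivAt 0 hline
    exact this
  have hs := hconv.le_slope_of_hasDerivAt (Set.mem_univ 0) (Set.mem_univ 1)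
    one_pos hd
  have hsl : slope φ 0 1 = g y - g x := by
    simp [slope_def_field, hφ]
  linarith [hs.trans_eq hsl]

theorem suboptimality_bound {n : ℕ}
    (g h : EuclideanSpace ℝ (Fin n) → ℝ)
    (g' : EuclideanSpace ℝ (Fin n) → EuclideanSpace ℝ (Fin n))
    (hg : ConvexOn ℝ Set.univ g)
    (hh : ConvexOn ℝ Set.univ h)
    (hgdiff : ∀ x, HasGradientAt g (g' x) x)
    (xs : EuclideanSpace ℝ (Fin n))
    (hmin : ∀ x, g xs + h xs ≤ g x + h x)
    (lam : ℝ) (hlam : 0 < lam)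
    (x ε p q : EuclideanSpace ℝ (Fin n))
    (hp : p ∈ subdiff h (x - ε))
    (hpe : (lam⁻¹) • ε = g' x + p)
    (hq : q ∈ subdiff h x) :
    g x + h x - (g xs + h xs) ≤ ⟪x - xs, (lam⁻¹) • ε⟫ + ⟪ε, q - p⟫ := by
  have h1 : g x + ⟪g' x, xs - x⟫ ≤ g xs := grad_ineq g hg (hgdiff x) xs
  have h2 : h (x - ε) + ⟪p, xs - (x - ε)⟫ ≤ h xs := hp xs
  have h3 : h x + ⟪q, (x - ε) - x⟫ ≤ h (x - ε) := hq (x - ε)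
  have key : ⟪x - xs, (lam⁻¹) • ε⟫ = ⟪g' x + p, x - xs⟫ := by
    rw [hpe]; exact real_inner_comm _ _
  rw [key]
  have e1 : ⟪g' x + p, x - xs⟫ = ⟪g' x, x - xs⟫ + ⟪p, x - xs⟫ := inner_add_left _ _ _
  have e2 : ⟪ε, q - p⟫ = ⟪ε, q⟫ - ⟪ε, p⟫ := inner_sub_right _ _ _
  have e3 : ⟪p, xs - (x - ε)⟫ = ⟪p, xs - x⟫ + ⟪p, ε⟫ := by
    rw [show xs - (x - ε) = (xs - x) + ε by abel, inner_add_right]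
  have e4 : ⟪q, (x - ε) - x⟫ = -⟪q, ε⟫ := by
    rw [show (x - ε) - x = -ε by abel, inner_neg_right]
  have e5 : ⟪g' x, x - xs⟫ = -⟪g' x, xs - x⟫ := by
    rw [show x - xs = -(xs - x) by abel, inner_neg_right]
  have e6 : ⟪p, x - xs⟫ = -⟪p, xs - x⟫ := by
    rw [show x - xs = -(xs - x) by abel, inner_neg_right]
  have c1 : ⟪ε, q⟫ = ⟪q, ε⟫ := real_inner_comm _ _
  have c2 : ⟪ε, p⟫ = ⟪p, ε⟫ := real_inner_comm _ _
  linarith
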